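/- Let m > 0. There exists a constant C = C(m) > 0 such that for all 0 ≤ τ ≤ t, all r ≥ 0, and all h ∈ L²([τ,t]; ℂ): | ∫_τ^t 𝟙{s ≤ t−r} ( J₁(m√((t−s)²−r²)) / √((t−s)²−r²) ) h(s) ds | ≤ C ( ∫_τ^t |h(s)|² ds )^{1/2}, where the kernel w ↦ J₁(mw)/w (with w = √((t−s)²−r²)) is extended continuously by the value m/2 at w = 0. -/

import Mathlib

open Real Set Filter MeasureTheory intervalIntegral

/-- The Bessel function of the first kind of order one,
`J₁(x) = (1/π) ∫₀^π cos(θ − x sin θ) dθ`. -/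
noncomputable def besselJ1 (x : ℝ) : ℝ :=
  (1 / π) * ∫ θ in (0:ℝ)..π, Real.cos (θ - x * Real.sin θ)

lemma abs_cos_sub_cos_le (a b : ℝ) : |Real.cos a - Real.cos b| ≤ |a - b| := by
  rw [Real.cos_sub_cos]
  rw [abs_mul, abs_mul]
  have h1 : |Real.sin ((a+b)/2)| ≤ 1 := Real.abs_sin_le_one _
  have h2 : |Real.sin ((a-b)/2)| ≤ |(a-b)/2| := Real.abs_sin_le_abs
  have : |(a-b)/2| = |a-b|/2 := by rw [abs_div]; norm_num
  calc |(-2:ℝ)| * |Real.sin ((a+b)/2)| * |Real.sin ((a-b)/2)|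
      ≤ 2 * 1 * (|a-b|/2) := by
        rw [abs_neg, abs_two, ← this]
        gcongr
    _ = |a - b| := by ring

lemma besselJ1_zero : besselJ1 0 = 0 := by
  simp [besselJ1, integral_cos]

lemma besselJ1_sub_le (x y : ℝ) : |besselJ1 x - besselJ1 y| ≤ |x - y| := by
  have hix : IntervalIntegrable (fun θ => Real.cos (θ - x * Real.sin θ)) volume 0 π := by
    apply Continuous.intervalIntegrable; fun_prop
  have hiy : IntervalIntegrable (fun θ => Real.cos (θ - y * Real.sin θ)) volume 0 π := by
    apply Continuous.intervalIntegrable; fun_prop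
  have key : besselJ1 x - besselJ1 y
      = (1/π) * ∫ θ in (0:ℝ)..π, (Real.cos (θ - x * Real.sin θ) - Real.cos (θ - y * Real.sin θ)) := by
    rw [intervalIntegral.integral_sub hix hiy, besselJ1, besselJ1]; ring
  rw [key, abs_mul]
  have hb : ‖∫ θ in (0:ℝ)..π, (Real.cos (θ - x * Real.sin θ) - Real.cos (θ - y * Real.sin θ))‖
      ≤ |x - y| * |π - 0| := by
    apply intervalIntegral.norm_integral_le_of_norm_le_const
    intro θ hθ
    calc ‖Real.cos (θ - x * Real.sin θ) - Real.cos (θ - y * Real.sin θ)‖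
        ≤ |(θ - x * Real.sin θ) - (θ - y * Real.sin θ)| := _root_.abs_cos_sub_cos_le _ _
      _ = |x - y| * |Real.sin θ| := by rw [← abs_mul, ← abs_neg]; congr 1; ring
      _ ≤ |x - y| * 1 := by gcongr; exact Real.abs_sin_le_one θ
      _ = |x - y| := mul_one _
  have hπ : (0:ℝ) < π := Real.pi_pos
  calc |1/π| * |∫ θ in (0:ℝ)..π, (Real.cos (θ - x * Real.sin θ) - Real.cos (θ - y * Real.sin θ))|
      ≤ (1/π) * (|x - y| * π) := by
        rw [abs_of_pos (by positivity : (0:ℝ) < 1/π)]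
        have := hb
        rw [sub_zero, abs_of_pos hπ] at this
        exact mul_le_mul_of_nonneg_left (this.trans_eq (by ring)) (by positivity)
    _ = |x - y| := by field_simp
  
lemma abs_besselJ1_le_abs (x : ℝ) : |besselJ1 x| ≤ |x| := by
  simpa [besselJ1_zero] using besselJ1_sub_le x 0

lemma abs_besselJ1_le_one (x : ℝ) : |besselJ1 x| ≤ 1 := by
  rw [besselJ1, abs_mul]
  have hπ : (0:ℝ) < π := Real.pi_pos
  have hb : ‖∫ θ in (0:ℝ)..π, Real.cos (θ - x * Real.sin θ)‖ ≤ 1 * |π - 0| := by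
    apply intervalIntegral.norm_integral_le_of_norm_le_const
    intro θ _
    exact Real.abs_cos_le_one _
  rw [sub_zero, abs_of_pos hπ, one_mul] at hb
  calc |1/π| * |∫ θ in (0:ℝ)..π, Real.cos (θ - x * Real.sin θ)|
      ≤ (1/π) * π := by rw [abs_of_pos (by positivity : (0:ℝ) < 1/π)]; exact mul_le_mul_of_nonneg_left hb (by positivity)
    _ = 1 := by field_simp

lemma continuous_besselJ1 : Continuous besselJ1 := by
  have : LipschitzWith 1 besselJ1 := by
    apply LipschitzWith.of_dist_le_mul
    intro x y
    rw [Real.dist_eq, Real.dist_eq, NNReal.coe_one, one_mul]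
    exact besselJ1_sub_le x y
  exact this.continuous

/-- The kernel `w ↦ J₁(m√(w²−r²))/√(w²−r²)`, extended continuously by the value
`m/2` at `w = r` (and below). -/
noncomputable def besselKernel (m r w : ℝ) : ℝ :=
  if r < w then besselJ1 (m * Real.sqrt (w ^ 2 - r ^ 2)) / Real.sqrt (w ^ 2 - r ^ 2)
  else m / 2

lemma measurable_besselKernel (m r : ℝ) : Measurable (besselKernel m r) := by
  unfold besselKernel
  have h1 : Continuous fun w : ℝ => Real.sqrt (w ^ 2 - r ^ 2) := by fun_prop
  exact Measurable.ite (measurableSet_lt measurable_const measurable_id)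
    (((continuous_besselJ1.comp (continuous_const.mul h1)).measurable).div h1.measurable)
    measurable_const

lemma abs_besselKernel_le {m r : ℝ} (hm : 0 < m) (hr : 0 ≤ r) (w : ℝ) :
    |besselKernel m r w| ≤ m := by
  unfold besselKernel
  split_ifs with h
  · have hw : 0 < w := lt_of_le_of_lt hr h
    have h2 : 0 < w ^ 2 - r ^ 2 := by nlinarith
    have hs : 0 < Real.sqrt (w ^ 2 - r ^ 2) := Real.sqrt_pos.2 h2
    rw [abs_div, abs_of_pos hs, div_le_iff₀ hs]
    calc |besselJ1 (m * Real.sqrt (w ^ 2 - r ^ 2))| ≤ |m * Real.sqrt (w ^ 2 - r ^ 2)| :=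
          abs_besselJ1_le_abs _
      _ = m * Real.sqrt (w ^ 2 - r ^ 2) := abs_of_pos (by positivity)
  · rw [abs_of_pos (by positivity)]; linarith

lemma sq_besselKernel_le {m r : ℝ} (hm : 0 < m) (hr : 0 ≤ r) {w : ℝ} (hw : r ≤ w) :
    (besselKernel m r w) ^ 2 ≤ 2 * m ^ 2 / (1 + (m * (w - r)) ^ 2) := by
  unfold besselKernel
  have hden : (0:ℝ) < 1 + (m * (w - r)) ^ 2 := by positivity
  split_ifs with h
  · have hwp : 0 < w := lt_of_le_of_lt hr h
    have h2 : 0 < w ^ 2 - r ^ 2 := by nlinarith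
    set u := Real.sqrt (w ^ 2 - r ^ 2) with hu
    have hu2 : u ^ 2 = w ^ 2 - r ^ 2 := Real.sq_sqrt h2.le
    have hupos : 0 < u := Real.sqrt_pos.2 h2
    set a := besselJ1 (m * u) with ha
    have ha1 : a ^ 2 ≤ 1 := by
      have := abs_besselJ1_le_one (m * u); nlinarith [sq_abs a, abs_nonneg a]
    have ha2 : a ^ 2 ≤ (m * u) ^ 2 := by
      have := abs_besselJ1_le_abs (m * u); nlinarith [sq_abs a, sq_abs (m*u), abs_nonneg a]
    have huv : (w - r) ^ 2 ≤ u ^ 2 := by rw [hu2]; nlinarith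
    rw [div_pow, div_le_div_iff₀ (by positivity) hden]
    nlinarith [mul_le_mul_of_nonneg_right ha1 (sq_nonneg (m * (w - r))),
      mul_le_mul_of_nonneg_left huv (sq_nonneg m), sq_nonneg (m*u)]
  · have hwr : w = r := le_antisymm (not_lt.1 h) hw
    rw [hwr, sub_self, mul_zero]
    have h0 : (1:ℝ) + (0:ℝ) ^ 2 = 1 := by norm_num
    rw [h0, div_one]
    nlinarith

lemma integral_lorentz_le {m : ℝ} (hm : 0 < m) (τ t c : ℝ) :
    (∫ s in τ..t, 2 * m ^ 2 / (1 + (m * (s - c)) ^ 2)) ≤ 2 * π * m := by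
  have h1 : (∫ s in τ..t, 2 * m ^ 2 / (1 + (m * (s - c)) ^ 2))
      = ∫ x in (τ - c)..(t - c), 2 * m ^ 2 / (1 + (m * x) ^ 2) :=
    intervalIntegral.integral_comp_sub_right (fun x => 2 * m ^ 2 / (1 + (m * x) ^ 2)) c
  have h2 : (∫ x in (τ - c)..(t - c), 2 * m ^ 2 / (1 + (m * x) ^ 2))
      = m⁻¹ • ∫ y in m * (τ - c)..m * (t - c), 2 * m ^ 2 / (1 + y ^ 2) :=
    intervalIntegral.integral_comp_mul_left (fun y => 2 * m ^ 2 / (1 + y ^ 2)) hm.ne'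
  have h3 : (∫ y in m * (τ - c)..m * (t - c), 2 * m ^ 2 / (1 + y ^ 2))
      = 2 * m ^ 2 * (arctan (m * (t - c)) - arctan (m * (τ - c))) := by
    simp_rw [div_eq_mul_inv]
    rw [intervalIntegral.integral_const_mul, integral_inv_one_add_sq]
  rw [h1, h2, h3, smul_eq_mul]
  have harc : arctan (m * (t - c)) - arctan (m * (τ - c)) ≤ π := by
    have := Real.arctan_lt_pi_div_two (m * (t - c))
    have := Real.neg_pi_div_two_lt_arctan (m * (τ - c))
    linarith
  calc m⁻¹ * (2 * m ^ 2 * (arctan (m * (t - c)) - arctan (m * (τ - c))))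
      ≤ m⁻¹ * (2 * m ^ 2 * π) := by
        apply mul_le_mul_of_nonneg_left _ (by positivity)
        apply mul_le_mul_of_nonneg_left harc (by positivity)
    _ = 2 * π * m := by field_simp



/-- Let `m > 0`.  There is `C = C(m) > 0` such that for all
`0 ≤ τ ≤ t`, all `r ≥ 0` and all `h ∈ L²([τ,t];ℂ)`:
`|∫_τ^t 𝟙{s ≤ t−r} (J₁(m√((t−s)²−r²))/√((t−s)²−r²)) h(s) ds|
  ≤ C (∫_τ^t |h(s)|² ds)^{1/2}`,
the kernel being extended continuously by `m/2` at `√((t−s)²−r²) = 0`. -/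
theorem bessel_tail_pointwise_bound
    (m : ℝ) (hm : 0 < m) :
    ∃ C > 0, ∀ τ t r : ℝ, 0 ≤ τ → τ ≤ t → 0 ≤ r → ∀ h : ℝ → ℂ,
      MemLp h 2 ((volume : Measure ℝ).restrict (Icc τ t)) →
      ‖∫ s in τ..t, (if s ≤ t - r then (besselKernel m r (t - s) : ℂ) else 0) * h s‖
        ≤ C * (∫ s in τ..t, ‖h s‖ ^ 2) ^ ((1:ℝ)/2) := by
  refine ⟨Real.sqrt (2 * π * m), Real.sqrt_pos.2 (by positivity), ?_⟩
  intro τ t r hτ hτt hr h hh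
  set K : ℝ → ℂ := fun s => if s ≤ t - r then (besselKernel m r (t - s) : ℂ) else 0 with hK
  set μ := (volume : Measure ℝ).restrict (Ioc τ t) with hμ
  haveI : IsFiniteMeasure μ := ⟨by rw [hμ, Measure.restrict_apply_univ]; exact measure_Ioc_lt_top⟩
  have hKmeas : Measurable K := by
    apply Measurable.ite (measurableSet_le measurable_id measurable_const)
    · exact Complex.measurable_ofReal.comp
        ((measurable_besselKernel m r).comp (measurable_const.sub measurable_id))
    · exact measurable_const
  have hKbd : ∀ s, ‖K s‖ ≤ m := by
    intro s
    rw [hK]; dsimp only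
    split_ifs with hs
    · rw [Complex.norm_real, Real.norm_eq_abs]
      exact abs_besselKernel_le hm hr _
    · simpa using hm.le
  have hKmem : MemLp K 2 μ :=
    MemLp.of_bound hKmeas.aestronglyMeasurable m (Eventually.of_forall hKbd)
  have hhmem : MemLp h 2 μ :=
    hh.mono_measure (Measure.restrict_mono Ioc_subset_Icc_self le_rfl)
  have hconj : Real.HolderConjugate 2 2 := ⟨by norm_num, by norm_num, by norm_num⟩
  have hKmem' : MemLp K (ENNReal.ofReal 2) μ := by rw [ENNReal.ofReal_ofNat]; exact hKmem
  have hhmem' : MemLp h (ENNReal.ofReal 2) μ := by rw [ENNReal.ofReal_ofNat]; exact hhmem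
  have holder := MeasureTheory.integral_mul_norm_le_Lp_mul_Lq hconj hKmem' hhmem'
  have hbound_int : Integrable (fun s => 2 * m ^ 2 / (1 + (m * (s - (t - r))) ^ 2)) μ := by
    rw [hμ]
    apply Continuous.integrableOn_Ioc
    apply continuous_const.div
    · fun_prop
    · intro x; positivity
  have hK2 : (∫ a, ‖K a‖ ^ (2:ℝ) ∂μ) ≤ 2 * π * m := by
    have hle : ∀ s, ‖K s‖ ^ (2:ℝ) ≤ 2 * m ^ 2 / (1 + (m * (s - (t - r))) ^ 2) := by
      intro s
      rw [show ((2:ℝ)) = ((2:ℕ):ℝ) by norm_num, Real.rpow_natCast]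
      by_cases hs : s ≤ t - r
      · rw [hK]; dsimp only
        rw [if_pos hs, Complex.norm_real, Real.norm_eq_abs, sq_abs]
        have hb := sq_besselKernel_le hm hr (show r ≤ t - s by linarith)
        have he : (m * (t - s - r)) ^ 2 = (m * (s - (t - r))) ^ 2 := by ring
        rw [he] at hb
        exact hb
      · rw [hK]; dsimp only
        rw [if_neg hs]
        simp only [norm_zero]
        rw [zero_pow (by norm_num : (2:ℕ) ≠ 0)]
        positivity
    calc (∫ a, ‖K a‖ ^ (2:ℝ) ∂μ)
        ≤ ∫ a, 2 * m ^ 2 / (1 + (m * (a - (t - r))) ^ 2) ∂μ :=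
          integral_mono_of_nonneg
            (Eventually.of_forall fun s => Real.rpow_nonneg (norm_nonneg _) _)
            hbound_int (Eventually.of_forall hle)
      _ = ∫ s in τ..t, 2 * m ^ 2 / (1 + (m * (s - (t - r))) ^ 2) :=
          (intervalIntegral.integral_of_le hτt).symm
      _ ≤ 2 * π * m := integral_lorentz_le hm τ t (t - r)
  have hmain : ‖∫ s in τ..t, K s * h s‖ ≤ ∫ a, ‖K a‖ * ‖h a‖ ∂μ := by
    rw [intervalIntegral.integral_of_le hτt]
    refine le_trans (norm_integral_le_integral_norm _) (le_of_eq ?_)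
    exact integral_congr_ae (Eventually.of_forall fun s => norm_mul _ _)
  have hrhs : (∫ a, ‖h a‖ ^ (2:ℝ) ∂μ) = ∫ s in τ..t, ‖h s‖ ^ 2 := by
    rw [intervalIntegral.integral_of_le hτt]
    exact integral_congr_ae (Eventually.of_forall fun s => by
      show ‖h s‖ ^ (2:ℝ) = ‖h s‖ ^ (2:ℕ)
      rw [show ((2:ℝ)) = ((2:ℕ):ℝ) by norm_num, Real.rpow_natCast])
  have h1 : (∫ a, ‖K a‖ ^ (2:ℝ) ∂μ) ^ ((1:ℝ)/2) ≤ Real.sqrt (2 * π * m) := by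
    rw [Real.sqrt_eq_rpow]
    exact Real.rpow_le_rpow
      (integral_nonneg fun s => Real.rpow_nonneg (norm_nonneg _) _) hK2 (by norm_num)
  calc ‖∫ s in τ..t, K s * h s‖
      ≤ ∫ a, ‖K a‖ * ‖h a‖ ∂μ := hmain
    _ ≤ (∫ a, ‖K a‖ ^ (2:ℝ) ∂μ) ^ ((1:ℝ)/2) * (∫ a, ‖h a‖ ^ (2:ℝ) ∂μ) ^ ((1:ℝ)/2) := holder
    _ ≤ Real.sqrt (2 * π * m) * (∫ s in τ..t, ‖h s‖ ^ 2) ^ ((1:ℝ)/2) := by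
        rw [hrhs]
        apply mul_le_mul_of_nonneg_right h1
        apply Real.rpow_nonneg
        rw [intervalIntegral.integral_of_le hτt]
        exact integral_nonneg fun s => by positivity
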